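/- Let k ≥ ℓ ≥ 1 be natural numbers. Every (k|ℓ)-admissible real number ε satisfies ε ≤ 2^{-k} · ∑_{i=ℓ}^{k} C(k,i), where C(k,i) denotes the binomial coefficient. -/
import Mathlib


/-- `𝒜` is a union-closed family on the finite set `X`:
every member is a subset of `X`, `∅ ∈ 𝒜`, `X ∈ 𝒜`, and `𝒜` is closed under unions. -/
def UnionClosedOn (X : Finset ℕ) (𝒜 : Finset (Finset ℕ)) : Prop :=
  (∀ A ∈ 𝒜, A ⊆ X) ∧ ∅ ∈ 𝒜 ∧ X ∈ 𝒜 ∧ ∀ A₁ ∈ 𝒜, ∀ A₂ ∈ 𝒜, A₁ ∪ A₂ ∈ 𝒜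

/-- `𝒜` is `k|ℓ`-separated on `X`: `|X| ≥ k` and for any `k` distinct elements of `X`
(the first `ℓ` of them forming `T`, the remaining `k - ℓ` forming `U`)
there is `A ∈ 𝒜` containing all of `T` and disjoint from `U`. -/
def Separated (k ℓ : ℕ) (X : Finset ℕ) (𝒜 : Finset (Finset ℕ)) : Prop :=
  k ≤ X.card ∧
    ∀ T U : Finset ℕ, T ⊆ X → U ⊆ X → Disjoint T U → T.card = ℓ → U.card = k - ℓ →
      ∃ A ∈ 𝒜, T ⊆ A ∧ U ∩ A = ∅

/-- `ε ≥ 0` is `(k|ℓ)`-admissible: for every `k|ℓ`-separated union-closed family `𝒜` on a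
finite nonempty set `X` there is `S ⊆ X` with `|S| = k` such that at least `ε·|𝒜|`
members `A` of `𝒜` satisfy `|A ∩ S| ≥ ℓ`. -/
def Admissible (k ℓ : ℕ) (ε : ℝ) : Prop :=
  0 ≤ ε ∧
    ∀ (X : Finset ℕ) (𝒜 : Finset (Finset ℕ)), X.Nonempty → UnionClosedOn X 𝒜 →
      Separated k ℓ X 𝒜 →
        ∃ S ⊆ X, S.card = k ∧
          ε * (𝒜.card : ℝ) ≤ (((𝒜.filter fun A => ℓ ≤ (A ∩ S).card)).card : ℝ)

theorem stmt0 (k ℓ : ℕ) (hℓ : 1 ≤ ℓ) (hk : ℓ ≤ k) (ε : ℝ) (hε : Admissible k ℓ ε) :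
    ε ≤ (2 : ℝ) ^ (-(k : ℤ)) * ∑ i ∈ Finset.Icc ℓ k, (k.choose i : ℝ) := by
  have hk1 : 1 ≤ k := hℓ.trans hk
  set X := Finset.range k with hX
  have hXcard : X.card = k := Finset.card_range k
  have hXne : X.Nonempty := by
    rw [hX]; exact Finset.nonempty_range_iff.mpr (by omega)
  have huc : UnionClosedOn X X.powerset := by
    refine ⟨fun A hA => Finset.mem_powerset.mp hA, Finset.empty_mem_powerset X,
      Finset.mem_powerset_self X, fun A₁ h1 A₂ h2 => ?_⟩
    rw [Finset.mem_powerset] at *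
    exact Finset.union_subset h1 h2
  have hsep : Separated k ℓ X X.powerset := by
    refine ⟨by rw [hXcard], fun T U hT hU hd hTc hUc => ?_⟩
    exact ⟨T, Finset.mem_powerset.mpr hT, le_refl T,
      Finset.disjoint_iff_inter_eq_empty.mp hd.symm⟩
  obtain ⟨S, hS, hScard, hineq⟩ := hε.2 X X.powerset hXne huc hsep
  have hSX : S = X := Finset.eq_of_subset_of_card_le hS (by rw [hXcard, hScard])
  have hfilter : (X.powerset.filter fun A => ℓ ≤ (A ∩ S).card)
      = X.powerset.filter fun A => ℓ ≤ A.card := by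
    apply Finset.filter_congr
    intro A hA
    rw [hSX, Finset.inter_eq_left.mpr (Finset.mem_powerset.mp hA)]
  have hcount : (X.powerset.filter fun A => ℓ ≤ A.card).card
      = ∑ i ∈ Finset.Icc ℓ k, k.choose i := by
    have heq : (X.powerset.filter fun A => ℓ ≤ A.card)
        = (Finset.Icc ℓ k).biUnion (fun i => X.powersetCard i) := by
      ext A
      simp only [Finset.mem_filter, Finset.mem_powerset, Finset.mem_biUnion,
        Finset.mem_powersetCard, Finset.mem_Icc]
      constructor
      · rintro ⟨hA, hl⟩
        exact ⟨A.card, ⟨hl, (Finset.card_le_card hA).trans hXcard.le⟩, hA, rfl⟩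
      · rintro ⟨i, ⟨hl, _⟩, hA, rfl⟩
        exact ⟨hA, hl⟩
    rw [heq, Finset.card_biUnion]
    · simp [Finset.card_powersetCard, hXcard]
    · intro i hi j hj hij
      apply Finset.disjoint_left.mpr
      intro A hAi hAj
      rw [Finset.mem_powersetCard] at hAi hAj
      exact hij (hAi.2.symm.trans hAj.2)
  rw [hfilter, hcount, Finset.card_powerset, hXcard] at hineq
  push_cast at hineq
  rw [zpow_neg, zpow_natCast]
  rw [inv_mul_eq_div, le_div_iff₀ (by positivity)]
  exact hineq
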